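/- Let (μ_N)_{N≥1} be probability measures, μ_N on Ω_N, having a limit shape l under a scaling (r_N). Then for every ε > 0 there exist reals 0 < u₁ < u_d < ∞ such that lim_{N→∞} μ_N{η ∈ Ω_N : Σ_{k = ⌊u₁·r_N⌋}^{⌊u_d·r_N⌋ − 1} k·n_k(η) > (1−ε)·N} = 1; that is, asymptotically almost all of the mass N is carried by parts of size between u₁·r_N and u_d·r_N. -/

import Mathlib

open scoped Classical BigOperators Topology
open Filter MeasureTheory ProbabilityTheory Finset

noncomputable section

/-- `pc η k` is `n_k(η)`, the number of parts of size `k` in the partition `η`. -/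
def pc {N : ℕ} (η : Nat.Partition N) (k : ℕ) : ℕ := Multiset.count k η.parts

/-- `qN η` is the size of the largest part of `η`. -/
def qN {N : ℕ} (η : Nat.Partition N) : ℕ := η.parts.sup

/-- `nuAbove η u = ν(u;η)`, the number of parts of `η` of size `≥ u`. -/
def nuAbove {N : ℕ} (η : Nat.Partition N) (u : ℝ) : ℕ :=
  Multiset.card (η.parts.filter (fun k => u ≤ (k : ℝ)))

/-- probability of the set of partitions satisfying `P` under the mass function `μ`. -/
def prob {N : ℕ} (μ : Nat.Partition N → ℝ) (P : Nat.Partition N → Prop) : ℝ :=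
  ∑ η ∈ Finset.univ.filter P, μ η

/-- `μ` is a sequence of probability measures, `μ N` on the partitions of `N` (for `N ≥ 1`). -/
def IsProbSeq (μ : ∀ N : ℕ, Nat.Partition N → ℝ) : Prop :=
  ∀ N : ℕ, 1 ≤ N → (∀ η : Nat.Partition N, 0 ≤ μ N η) ∧ (∑ η : Nat.Partition N, μ N η) = 1

/-- `l` is the limit shape of the sequence of measures `μ` under the scaling `r`:
`l` is a continuous nonincreasing nonnegative function on `[0,∞)` of total integral `1`,
`r N > 0`, `r N / N → 0`, and for all `0 < a < b`, `ε > 0`, the `μ N`-probability that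
`sup_{u ∈ [a,b]} |(r N / N)·ν(r N · u) - l u| < ε` tends to `1`. -/
def HasLimitShape (μ : ∀ N : ℕ, Nat.Partition N → ℝ) (r : ℕ → ℝ) (l : ℝ → ℝ) : Prop :=
  (∀ N : ℕ, 1 ≤ N → 0 < r N) ∧
  Tendsto (fun N : ℕ => r N / (N : ℝ)) atTop (𝓝 0) ∧
  ContinuousOn l (Set.Ici 0) ∧
  AntitoneOn l (Set.Ici 0) ∧
  (∀ u : ℝ, 0 ≤ u → 0 ≤ l u) ∧
  (∫ u in Set.Ioi (0:ℝ), l u) = 1 ∧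
  (∀ a b ε : ℝ, 0 < a → a < b → 0 < ε →
    Tendsto (fun N : ℕ => prob (μ N) (fun η =>
        sSup ((fun u => |r N / (N : ℝ) * (nuAbove η (r N * u) : ℝ) - l u|) '' Set.Icc a b) < ε))
      atTop (𝓝 1))

/-! ### Auxiliary lemmas -/

/-- number of parts of size `≥ x` for a natural threshold. -/
def nuN {N : ℕ} (η : Nat.Partition N) (x : ℕ) : ℕ :=
  Multiset.card (η.parts.filter (fun k => x ≤ k))

lemma coe_ms (s : Multiset ℕ) :
    (do let a ← s; pure ((a:ℝ)) : Multiset ℝ) = Multiset.map (fun a : ℕ => (a:ℝ)) s := by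
  induction s using Multiset.induction_on with
  | empty => rfl
  | cons a s ih => simp [Multiset.cons_bind] at *

lemma nuAbove_def' {N : ℕ} (η : Nat.Partition N) (x : ℝ) :
    nuAbove η x = Multiset.card (Multiset.filter (fun k : ℕ => x ≤ (k:ℝ)) η.parts) := by
  unfold nuAbove
  rw [coe_ms, Multiset.filter_map, Multiset.card_map]
  rfl

lemma ms_card_le_sum (s : Multiset ℕ) (h : ∀ x ∈ s, 1 ≤ x) : Multiset.card s ≤ s.sum := by
  simpa using Multiset.card_nsmul_le_sum h

lemma card_filter_split (s : Multiset ℕ) (p q : ℕ → Prop)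
    [DecidablePred p] [DecidablePred q]
    (h : ∀ k, q k → p k) :
    Multiset.card (s.filter p) =
      Multiset.card (s.filter (fun k => p k ∧ ¬ q k)) + Multiset.card (s.filter q) := by
  have h1 : (s.filter p).filter (fun k => ¬ q k) + (s.filter p).filter q = s.filter p := by
    rw [add_comm]; exact Multiset.filter_add_not _ _
  have h2 : (s.filter p).filter (fun k => ¬ q k) = s.filter (fun k => p k ∧ ¬ q k) := by
    rw [Multiset.filter_filter]
    exact Multiset.filter_congr (fun k _ => by tauto)
  have h3 : (s.filter p).filter q = s.filter q := by
    rw [Multiset.filter_filter]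
    exact Multiset.filter_congr (fun k _ => by tauto)
  calc Multiset.card (s.filter p)
      = Multiset.card ((s.filter p).filter (fun k => ¬ q k) + (s.filter p).filter q) := by rw [h1]
    _ = _ := by rw [Multiset.card_add, h2, h3]

lemma card_filter_mem (s : Multiset ℕ) (F : Finset ℕ) :
    Multiset.card (s.filter (fun k => k ∈ F)) = ∑ k ∈ F, s.count k := by
  induction s using Multiset.induction_on with
  | empty => simp
  | cons a s ih =>
      have hc : ∑ k ∈ F, Multiset.count k (a ::ₘ s)
          = (∑ k ∈ F, Multiset.count k s) + (if a ∈ F then 1 else 0) := by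
        simp only [Multiset.count_cons, Finset.sum_add_distrib,
          Finset.sum_ite_eq' F a (fun _ => 1)]
      by_cases ha : a ∈ F
      · rw [Multiset.filter_cons_of_pos _ ha, Multiset.card_cons, ih, hc, if_pos ha]
      · rw [Multiset.filter_cons_of_neg _ ha, ih, hc, if_neg ha, add_zero]

lemma parts_card_le {N : ℕ} (η : Nat.Partition N) : Multiset.card η.parts ≤ N := by
  have h := η.parts_sum
  calc Multiset.card η.parts ≤ η.parts.sum := ms_card_le_sum _ (fun x hx => η.parts_pos hx)
    _ = N := h

lemma nuAbove_le {N : ℕ} (η : Nat.Partition N) (x : ℝ) : nuAbove η x ≤ N := by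
  rw [nuAbove_def']
  exact le_trans (Multiset.card_le_card (Multiset.filter_le _ _)) (parts_card_le η)

lemma nuAbove_eq_nuN {N : ℕ} (η : Nat.Partition N) (x : ℝ) : nuAbove η x = nuN η ⌈x⌉₊ := by
  rw [nuAbove_def', show Multiset.filter (fun k : ℕ => x ≤ (k:ℝ)) η.parts
      = Multiset.filter (fun k => ⌈x⌉₊ ≤ k) η.parts from
    Multiset.filter_congr (fun k _ => (Nat.ceil_le).symm)]
  rfl

lemma nuN_split {N : ℕ} (η : Nat.Partition N) {x y : ℕ} (h : x ≤ y) :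
    nuN η x = (∑ k ∈ Finset.Ico x y, pc η k) + nuN η y := by
  unfold nuN
  rw [card_filter_split η.parts (fun k => x ≤ k) (fun k => y ≤ k) (fun k hk => le_trans h hk)]
  congr 1
  have he : (η.parts.filter (fun k => x ≤ k ∧ ¬ y ≤ k))
      = η.parts.filter (fun k => k ∈ Finset.Ico x y) :=
    Multiset.filter_congr (fun k _ => by simp [Finset.mem_Ico, not_le])
  rw [he, card_filter_mem]
  rfl

lemma exists_part_between {N : ℕ} (η : Nat.Partition N) {x y : ℝ}
    (hlt : nuAbove η y < nuAbove η x) :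
    ∃ k ∈ η.parts, x ≤ (k:ℝ) ∧ (k:ℝ) < y := by
  rw [nuAbove_def', nuAbove_def'] at hlt
  by_cases hxy : x ≤ y
  · have hsplit := card_filter_split η.parts (fun k : ℕ => x ≤ (k:ℝ)) (fun k : ℕ => y ≤ (k:ℝ))
      (fun k hk => le_trans hxy hk)
    rw [hsplit] at hlt
    have hpos : 0 < Multiset.card (η.parts.filter
        (fun k : ℕ => (fun k : ℕ => x ≤ (k:ℝ)) k ∧ ¬ (fun k : ℕ => y ≤ (k:ℝ)) k)) := by
      exact Nat.pos_of_ne_zero (fun h0 => by rw [h0] at hlt; omega)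
    rw [Multiset.card_pos] at hpos
    obtain ⟨k, hk⟩ := Multiset.exists_mem_of_ne_zero hpos
    rw [Multiset.mem_filter] at hk
    exact ⟨k, hk.1, hk.2.1, not_le.mp hk.2.2⟩
  · exfalso
    push_neg at hxy
    have : Multiset.card (η.parts.filter (fun k : ℕ => x ≤ (k:ℝ)))
        ≤ Multiset.card (η.parts.filter (fun k : ℕ => y ≤ (k:ℝ))) :=
      Multiset.card_le_card (Multiset.monotone_filter_right _
        (fun k hk => le_trans (le_of_lt hxy) hk))
    omega

lemma sum_cells {N : ℕ} (η : Nat.Partition N) (b : ℕ → ℕ) (hb : Monotone b) (m : ℕ) :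
    ∑ i ∈ Finset.range m, ∑ k ∈ Finset.Ico (b i) (b (i+1)), k * pc η k
      = ∑ k ∈ Finset.Ico (b 0) (b m), k * pc η k := by
  induction m with
  | zero => simp
  | succ n ih =>
      rw [Finset.sum_range_succ, ih,
        Finset.sum_Ico_consecutive _ (hb (Nat.zero_le n)) (hb (Nat.le_succ n))]

lemma mass_lower {N : ℕ} (η : Nat.Partition N) (b : ℕ → ℕ) (hb : Monotone b) (m : ℕ) (s t : ℕ)
    (hs : s ≤ b 0) (ht : b m ≤ t) :
    ∑ i ∈ Finset.range m, (b i) * (∑ k ∈ Finset.Ico (b i) (b (i+1)), pc η k)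
      ≤ ∑ k ∈ Finset.Ico s t, k * pc η k := by
  calc ∑ i ∈ Finset.range m, (b i) * (∑ k ∈ Finset.Ico (b i) (b (i+1)), pc η k)
      ≤ ∑ i ∈ Finset.range m, ∑ k ∈ Finset.Ico (b i) (b (i+1)), k * pc η k := by
        refine Finset.sum_le_sum fun i _ => ?_
        rw [Finset.mul_sum]
        exact Finset.sum_le_sum fun k hk => Nat.mul_le_mul_right _ (Finset.mem_Ico.1 hk).1
    _ = ∑ k ∈ Finset.Ico (b 0) (b m), k * pc η k := sum_cells η b hb m
    _ ≤ ∑ k ∈ Finset.Ico s t, k * pc η k :=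
        Finset.sum_le_sum_of_subset (Finset.Ico_subset_Ico hs ht)

lemma abel_sum (m : ℕ) (a x : ℕ → ℝ) :
    ∑ i ∈ Finset.range m, a i * (x i - x (i+1)) =
      (∑ i ∈ Finset.range m, (a (i+1) - a i) * x (i+1)) + a 0 * x 0 - a m * x m := by
  induction m with
  | zero => simp
  | succ n ih =>
      rw [Finset.sum_range_succ, Finset.sum_range_succ (fun i => (a (i+1) - a i) * x (i+1)), ih]
      ring

lemma sum_integral_adjacent (l : ℝ → ℝ) (hint : IntegrableOn l (Set.Ioi 0))
    (g : ℕ → ℝ) (hg : Monotone g) (hg0 : 0 < g 0) (m : ℕ) :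
    ∑ i ∈ Finset.range m, ∫ x in Set.Ioc (g i) (g (i+1)), l x
      = ∫ x in Set.Ioc (g 0) (g m), l x := by
  have hsub : ∀ i j : ℕ, Set.Ioc (g i) (g j) ⊆ Set.Ioi (0:ℝ) := fun i j =>
    subset_trans Set.Ioc_subset_Ioi_self
      (Set.Ioi_subset_Ioi (le_of_lt (lt_of_lt_of_le hg0 (hg (Nat.zero_le i)))))
  induction m with
  | zero => simp
  | succ n ih =>
      rw [Finset.sum_range_succ, ih, ← MeasureTheory.setIntegral_union
        (Set.Ioc_disjoint_Ioc_of_le le_rfl) measurableSet_Ioc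
        (hint.mono_set (hsub 0 n)) (hint.mono_set (hsub n (n+1)))]
      rw [Set.Ioc_union_Ioc_eq_Ioc (hg (Nat.zero_le n)) (hg (Nat.le_succ n))]

/-- From positive probability, existence of a partition in the event. -/
lemma exists_of_prob_pos {N : ℕ} {μ : Nat.Partition N → ℝ} {P : Nat.Partition N → Prop}
    (h : 0 < prob μ P) : ∃ η, P η := by
  by_contra hc
  push_neg at hc
  have : Finset.univ.filter P = ∅ := Finset.filter_false_of_mem (fun η _ => hc η)
  rw [prob, this, Finset.sum_empty] at h
  exact lt_irrefl 0 h

lemma prob_le_prob {N : ℕ} {μ : Nat.Partition N → ℝ} {P Q : Nat.Partition N → Prop}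
    (hμ : ∀ η, 0 ≤ μ η) (h : ∀ η, P η → Q η) : prob μ P ≤ prob μ Q := by
  refine Finset.sum_le_sum_of_subset_of_nonneg ?_ (fun η _ _ => hμ η)
  intro η hη
  rw [Finset.mem_filter] at *
  exact ⟨hη.1, h η hη.2⟩

lemma prob_le_one {N : ℕ} {μ : Nat.Partition N → ℝ} {P : Nat.Partition N → Prop}
    (hμ : ∀ η, 0 ≤ μ η) (htot : (∑ η : Nat.Partition N, μ η) = 1) : prob μ P ≤ 1 := by
  rw [← htot]
  exact Finset.sum_le_sum_of_subset_of_nonneg (Finset.filter_subset _ _) (fun η _ _ => hμ η)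

/-- pointwise consequence of the sup event. -/
lemma sup_event {l : ℝ → ℝ} (hmono : AntitoneOn l (Set.Ici 0))
    (hpos : ∀ u : ℝ, 0 ≤ u → 0 ≤ l u) {N : ℕ} (hN : 1 ≤ N) (η : Nat.Partition N)
    {r a b ε : ℝ} (hr : 0 < r) (ha : 0 < a)
    (hsup : sSup ((fun u => |r / (N : ℝ) * (nuAbove η (r * u) : ℝ) - l u|) '' Set.Icc a b) < ε) :
    ∀ u ∈ Set.Icc a b, |r / (N : ℝ) * (nuAbove η (r * u) : ℝ) - l u| < ε := by
  intro u hu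
  have hNpos : (0:ℝ) < N := by exact_mod_cast hN
  have hbdd : BddAbove ((fun u => |r / (N : ℝ) * (nuAbove η (r * u) : ℝ) - l u|) '' Set.Icc a b) := by
    refine ⟨r + l a, ?_⟩
    rintro x ⟨v, hv, rfl⟩
    have h1 : (0:ℝ) ≤ r / N * (nuAbove η (r * v) : ℝ) :=
      mul_nonneg (le_of_lt (div_pos hr hNpos)) (Nat.cast_nonneg _)
    have h2 : r / N * (nuAbove η (r * v) : ℝ) ≤ r := by
      have := nuAbove_le η (r * v)
      calc r / N * (nuAbove η (r * v) : ℝ) ≤ r / N * N := by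
            apply mul_le_mul_of_nonneg_left _ (le_of_lt (div_pos hr hNpos))
            exact_mod_cast this
        _ = r := by field_simp
    have h3 : 0 ≤ l v := hpos v (le_trans (le_of_lt ha) hv.1)
    have h4 : l v ≤ l a := hmono (le_of_lt ha) (le_trans (le_of_lt ha) hv.1) hv.1
    calc |r / N * (nuAbove η (r * v) : ℝ) - l v|
        ≤ |r / N * (nuAbove η (r * v) : ℝ)| + |l v| := abs_sub _ _
      _ ≤ r + l a := add_le_add (by rwa [abs_of_nonneg h1]) (by rwa [abs_of_nonneg h3])
  exact lt_of_le_of_lt (le_csSup hbdd ⟨u, hu, rfl⟩) hsup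
-- appended to main.lean for testing
set_option maxHeartbeats 1000000 in
lemma r_eventually_gt (μ : ∀ N : ℕ, Nat.Partition N → ℝ) (hμ : IsProbSeq μ)
    (r : ℕ → ℝ) (l : ℝ → ℝ) (hls : HasLimitShape μ r l) (C : ℝ) :
    ∀ᶠ N in atTop, C < r N := by
  obtain ⟨hr, hrN, hcont, hanti, hpos, hI, hev⟩ := hls
  have hint : IntegrableOn l (Set.Ioi 0) := by
    by_contra h
    rw [MeasureTheory.integral_undef h] at hI
    norm_num at hI
  -- l is not constant on (0,∞)
  have hne : ∃ a b : ℝ, 0 < a ∧ a < b ∧ l b < l a := by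
    by_contra h
    push_neg at h
    have hconst : ∀ x : ℝ, 0 < x → l x = l 1 := by
      intro x hx
      rcases lt_trichotomy x 1 with h1 | h1 | h1
      · exact le_antisymm (h x 1 hx h1) (hanti (Set.mem_Ici.mpr (le_of_lt hx)) (Set.mem_Ici.mpr zero_le_one) (le_of_lt h1))
      · rw [h1]
      · exact le_antisymm (hanti (Set.mem_Ici.mpr zero_le_one) (Set.mem_Ici.mpr (le_of_lt (lt_trans zero_lt_one h1))) (le_of_lt h1))
          (h 1 x zero_lt_one h1)
    rcases le_or_gt (l 1) 0 with hc | hc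
    · have hz : ∀ x ∈ Set.Ioi (0:ℝ), l x = 0 := fun x hx =>
        le_antisymm (le_trans (le_of_eq (hconst x hx)) hc) (hpos x (le_of_lt hx))
      rw [MeasureTheory.setIntegral_congr_fun measurableSet_Ioi hz] at hI
      norm_num at hI
    · have hconst' : IntegrableOn (fun _ : ℝ => l 1) (Set.Ioi 0) :=
        hint.congr_fun (fun x hx => hconst x hx) measurableSet_Ioi
      rw [MeasureTheory.integrableOn_const_iff] at hconst'
      rcases hconst' with h' | h'
      · exact absurd h' (by simpa using ne_of_gt hc)
      · rw [Real.volume_Ioi] at h'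
        exact absurd h' (by simp)
  obtain ⟨a, b, ha, hab, hlab⟩ := hne
  have hba : (0:ℝ) < b - a := sub_pos.mpr hab
  set Δ : ℝ := l a - l b with hΔdef
  have hΔ : 0 < Δ := sub_pos.mpr hlab
  set K : ℕ := ⌈C * (b - a)⌉₊ + 2 with hKdef
  have hK2 : 2 ≤ K := by omega
  have hKpos : (0:ℝ) < (K:ℝ) := by positivity
  set ε₁ : ℝ := Δ / (8 * K) with hε₁def
  have hε₁ : 0 < ε₁ := by positivity
  have hTend := hev a b ε₁ ha hab hε₁
  have hprob := hTend.eventually (eventually_gt_nhds (by norm_num : (1:ℝ)/2 < 1))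
  filter_upwards [hprob, eventually_ge_atTop 1] with N hpN hN1
  have hrpos : 0 < r N := hr N hN1
  have hNpos : (0:ℝ) < (N:ℝ) := by exact_mod_cast hN1
  obtain ⟨η, hηev⟩ := exists_of_prob_pos (lt_trans (by norm_num) hpN)
  have hpt := sup_event hanti hpos hN1 η hrpos ha hηev
  -- IVT points
  have hIVT : ∀ j : ℕ, ∃ w : ℝ, j < 2*K →
      (w ∈ Set.Icc a b ∧ l w = l a - j * (Δ / (2*K))) := by
    intro j
    by_cases hj : j < 2*K
    · have hv : l a - j * (Δ / (2*K)) ∈ Set.Icc (l b) (l a) := by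
        constructor
        · have hj' : (j:ℝ) ≤ 2*K := by exact_mod_cast le_of_lt hj
          have : (j:ℝ) * (Δ / (2*K)) ≤ (2*K) * (Δ / (2*K)) :=
            mul_le_mul_of_nonneg_right hj' (by positivity)
          have h2 : (2*(K:ℝ)) * (Δ / (2*K)) = Δ := by field_simp
          rw [hΔdef] at *
          nlinarith
        · nlinarith [mul_nonneg (Nat.cast_nonneg j) (le_of_lt (by positivity : (0:ℝ) < Δ / (2*K)))]
      obtain ⟨w, hwmem, hwval⟩ := intermediate_value_Icc' (le_of_lt hab)
        (hcont.mono (fun x hx => le_trans (le_of_lt ha) hx.1)) hv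
      exact ⟨w, fun _ => ⟨hwmem, hwval⟩⟩
    · exact ⟨0, fun h => absurd h hj⟩
  choose w hw using hIVT
  have hwIcc : ∀ j : ℕ, j < 2*K → w j ∈ Set.Icc a b := fun j hj => (hw j hj).1
  have hwmono : ∀ i j : ℕ, i < j → j < 2*K → w i < w j := by
    intro i j hij hj
    have hi := hw i (lt_trans hij hj)
    have hjj := hw j hj
    by_contra hc
    push_neg at hc
    have hle : l (w i) ≤ l (w j) :=
      hanti (Set.mem_Ici.mpr (le_trans (le_of_lt ha) hjj.1.1))
        (Set.mem_Ici.mpr (le_trans (le_of_lt ha) hi.1.1)) hc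
    rw [hi.2, hjj.2] at hle
    have hijR : (i:ℝ) < (j:ℝ) := by exact_mod_cast hij
    have hd : (0:ℝ) < Δ / (2*K) := by positivity
    have hm := mul_lt_mul_of_pos_right hijR hd
    linarith
  -- find parts in each gap
  have hpart : ∀ i : ℕ, ∃ k : ℕ, i < K →
      ((r N * w (2*i) ≤ (k:ℝ)) ∧ ((k:ℝ) < r N * w (2*i+1))) := by
    intro i
    by_cases hi : i < K
    · have h2i : 2*i < 2*K := by omega
      have h2i1 : 2*i+1 < 2*K := by omega
      have e1 := hpt (w (2*i)) (hwIcc _ h2i)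
      have e2 := hpt (w (2*i+1)) (hwIcc _ h2i1)
      rw [abs_lt] at e1 e2
      have hdiff : l (w (2*i)) - l (w (2*i+1)) = Δ / (2*K) := by
        rw [(hw _ h2i).2, (hw _ h2i1).2]
        push_cast
        ring
      have hx : (r N / N) * (nuAbove η (r N * w (2*i+1)) : ℝ)
          < (r N / N) * (nuAbove η (r N * w (2*i)) : ℝ) := by
        have h8 : 2 * ε₁ < Δ / (2*K) := by
          have he : 2 * ε₁ = Δ / (4*K) := by rw [hε₁def]; ring
          have hlt : Δ / (4*K) < Δ / (2*K) := by
            apply div_lt_div_of_pos_left hΔ (by positivity)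
            linarith
          linarith
        linarith [e1.1, e2.2]
      have hν : nuAbove η (r N * w (2*i+1)) < nuAbove η (r N * w (2*i)) := by
        have hdivpos : 0 < r N / N := div_pos hrpos hNpos
        have := (mul_lt_mul_iff_right₀ hdivpos).mp hx
        exact_mod_cast this
      obtain ⟨k, hkmem, hk1, hk2⟩ := exists_part_between η hν
      exact ⟨k, fun _ => ⟨hk1, hk2⟩⟩
    · exact ⟨0, fun h => absurd h hi⟩
  choose kk hkk using hpart
  have hchain : ∀ i : ℕ, i < K → (kk 0 : ℝ) + i ≤ (kk i : ℝ) := by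
    intro i
    induction i with
    | zero => simp
    | succ n ih =>
        intro hn1
        have hn : n < K := by omega
        have h1 := ih hn
        have hlt : kk n < kk (n+1) := by
          have b1 : (kk n : ℝ) < r N * w (2*n+1) := (hkk n hn).2
          have b2 : r N * w (2*(n+1)) ≤ kk (n+1) := (hkk (n+1) hn1).1
          have hwle : w (2*n+1) ≤ w (2*(n+1)) :=
            le_of_lt (hwmono _ _ (by omega) (by omega))
          have : (kk n : ℝ) < kk (n+1) := lt_of_lt_of_le b1
            (le_trans (mul_le_mul_of_nonneg_left hwle (le_of_lt hrpos)) b2)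
          exact_mod_cast this
        have h2 : (kk n : ℝ) + 1 ≤ kk (n+1) := by exact_mod_cast hlt
        push_cast
        linarith
  -- conclude
  have e0 := hkk 0 (by omega)
  have eK := hkk (K-1) (by omega)
  have hch := hchain (K-1) (by omega)
  have hcast : ((K-1 : ℕ) : ℝ) = (K:ℝ) - 1 := by
    have : (1:ℕ) ≤ K := by omega
    push_cast [Nat.cast_sub this]
    ring
  rw [hcast] at hch
  have hw0 : a ≤ w 0 := (hwIcc 0 (by omega)).1
  have hwK : w (2*(K-1)+1) ≤ b := (hwIcc _ (by omega)).2
  have hub : (kk (K-1) : ℝ) < r N * b :=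
    lt_of_lt_of_le eK.2 (mul_le_mul_of_nonneg_left hwK (le_of_lt hrpos))
  have hlb : r N * a ≤ (kk 0 : ℝ) :=
    le_trans (mul_le_mul_of_nonneg_left hw0 (le_of_lt hrpos)) e0.1
  have hKC : C * (b - a) ≤ (K:ℝ) - 1 := by
    have h1 : C * (b-a) ≤ (⌈C * (b - a)⌉₊ : ℝ) := Nat.le_ceil _
    have h2 : ((⌈C * (b - a)⌉₊ : ℕ) : ℝ) ≤ (K:ℝ) - 1 := by
      rw [hKdef]
      push_cast
      linarith
    linarith
  have hfin : C * (b - a) < r N * (b - a) := by nlinarith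
  exact (mul_lt_mul_iff_left₀ hba).mp hfin
lemma exists_n0 (l : ℝ → ℝ) (hint : IntegrableOn l (Set.Ioi 0))
    (hI : (∫ u in Set.Ioi (0:ℝ), l u) = 1) (δ : ℝ) (hδ : 0 < δ) :
    ∃ n : ℕ, 1 ≤ n ∧ 1 - δ < ∫ u in Set.Ioc (1/(n:ℝ)) ((n:ℝ)), l u := by
  have hsm : ∀ i : ℕ, MeasurableSet (Set.Ioc (1/((i:ℝ)+1)) ((i:ℝ)+1)) := fun i => measurableSet_Ioc
  have hmono : Monotone (fun i : ℕ => Set.Ioc (1/((i:ℝ)+1)) ((i:ℝ)+1)) := by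
    intro i j hij
    have hij' : ((i:ℝ)+1) ≤ ((j:ℝ)+1) := by
      have : (i:ℝ) ≤ j := by exact_mod_cast hij
      linarith
    apply Set.Ioc_subset_Ioc _ hij'
    exact one_div_le_one_div_of_le (by positivity) hij'
  have hunion : (⋃ i : ℕ, Set.Ioc (1/((i:ℝ)+1)) ((i:ℝ)+1)) = Set.Ioi (0:ℝ) := by
    ext x
    simp only [Set.mem_iUnion, Set.mem_Ioc, Set.mem_Ioi]
    constructor
    · rintro ⟨i, h1, _⟩
      exact lt_trans (by positivity) h1
    · intro hx
      obtain ⟨n, hn⟩ := exists_nat_gt (max (1/x) x)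
      have h1 : 1/x < (n:ℝ) := lt_of_le_of_lt (le_max_left _ _) hn
      have h2 : x < (n:ℝ) := lt_of_le_of_lt (le_max_right _ _) hn
      refine ⟨n, ?_, by linarith⟩
      rw [div_lt_iff₀ (by positivity)]
      rw [div_lt_iff₀ hx] at h1
      nlinarith
  have ht := MeasureTheory.tendsto_setIntegral_of_monotone hsm hmono (by rw [hunion]; exact hint)
  rw [hunion, hI] at ht
  have hev := ht.eventually (eventually_gt_nhds (by linarith : 1 - δ < 1))
  obtain ⟨i, hi⟩ := hev.exists
  refine ⟨i+1, by omega, ?_⟩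
  have : ((i+1 : ℕ):ℝ) = (i:ℝ)+1 := by push_cast; ring
  rw [this]
  exact hi
set_option maxHeartbeats 2000000 in
lemma core_bound {l : ℝ → ℝ}
    (hanti : AntitoneOn l (Set.Ici 0))
    (hpos : ∀ u : ℝ, 0 ≤ u → 0 ≤ l u)
    (hint : IntegrableOn l (Set.Ioi 0))
    (hI : (∫ u in Set.Ioi (0:ℝ), l u) = 1)
    {n₀ : ℕ} (hn₀1 : 1 ≤ n₀) {δ : ℝ} (hδ : 0 < δ)
    (hn₀ : 1 - δ < ∫ u in Set.Ioc (1/(n₀:ℝ)) ((n₀:ℝ)), l u)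
    {N : ℕ} (hN1 : 1 ≤ N) {r : ℝ} (hr1 : 1 < r) (η : Nat.Partition N)
    (hpt : ∀ u ∈ Set.Icc (1/(n₀:ℝ)) (3*(n₀:ℝ)),
      |r / (N:ℝ) * (nuAbove η (r * u) : ℝ) - l u| < δ/(6*(n₀:ℝ))) :
    (1 - 6*δ) * (N:ℝ) <
      ((∑ k ∈ Finset.Ico (⌊(1/(n₀:ℝ)) * r⌋₊) (⌊(3*(n₀:ℝ)) * r⌋₊), k * pc η k : ℕ) : ℝ) := by
  have hNpos : (0:ℝ) < N := by exact_mod_cast hN1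
  have hrpos : (0:ℝ) < r := lt_trans zero_lt_one hr1
  have hn₀R : (1:ℝ) ≤ (n₀:ℝ) := by exact_mod_cast hn₀1
  have hn₀pos : (0:ℝ) < (n₀:ℝ) := lt_of_lt_of_le zero_lt_one hn₀R
  set u₁ : ℝ := 1/(n₀:ℝ) with hu₁def
  set bs : ℝ := 3*(n₀:ℝ) - 1 with hbsdef
  have hu₁pos : 0 < u₁ := by positivity
  have hu₁le1 : u₁ ≤ 1 := by rw [hu₁def, div_le_one hn₀pos]; exact hn₀R
  have hbs2 : (2:ℝ) ≤ bs := by rw [hbsdef]; linarith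
  have hu₁bs : u₁ < bs := by linarith
  have hn₀bs : (n₀:ℝ) ≤ bs := by rw [hbsdef]; linarith
  have hbsud : bs ≤ 3*(n₀:ℝ) := by rw [hbsdef]; linarith
  set ε₀ : ℝ := δ/(6*(n₀:ℝ)) with hε₀def
  have hε₀pos : 0 < ε₀ := by positivity
  set m : ℕ := max 1 ⌈(bs - u₁) * l u₁ / δ⌉₊ with hmdef
  have hm1 : 1 ≤ m := le_max_left _ _
  have hmR : (1:ℝ) ≤ (m:ℝ) := by exact_mod_cast hm1
  have hmpos : (0:ℝ) < (m:ℝ) := by linarith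
  set h : ℝ := (bs - u₁)/(m:ℝ) with hhdef
  have hhpos : 0 < h := div_pos (by linarith) hmpos
  set a : ℕ → ℝ := fun i => u₁ + i*h with hadef
  have ha0 : a 0 = u₁ := by simp [hadef]
  have ham : a m = bs := by
    show u₁ + m*h = bs
    rw [hhdef]
    field_simp
    ring
  have hamono : Monotone a := by
    intro i j hij
    show u₁ + i*h ≤ u₁ + j*h
    have hij' : (i:ℝ) ≤ j := by exact_mod_cast hij
    have := mul_le_mul_of_nonneg_right hij' hhpos.le
    linarith
  have halow : ∀ i, u₁ ≤ a i := by
    intro i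
    show u₁ ≤ u₁ + i*h
    have : 0 ≤ (i:ℝ)*h := mul_nonneg (Nat.cast_nonneg _) hhpos.le
    linarith
  have haup : ∀ i, i ≤ m → a i ≤ bs := fun i hi => ham ▸ hamono hi
  have hapos : ∀ i, 0 < a i := fun i => lt_of_lt_of_le hu₁pos (halow i)
  have hstep : ∀ i, a (i+1) - a i = h := by
    intro i
    show (u₁ + (i+1:ℕ)*h) - (u₁ + i*h) = h
    push_cast
    ring
  set b : ℕ → ℕ := fun i => ⌈r * a i⌉₊ with hbdef
  have hbmono : Monotone b := fun i j hij =>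
    Nat.ceil_mono (mul_le_mul_of_nonneg_left (hamono hij) hrpos.le)
  set V : ℕ → ℝ := fun i => ((nuN η (b i) : ℕ) : ℝ) with hVdef
  set d : ℕ → ℕ := fun i => ∑ k ∈ Finset.Ico (b i) (b (i+1)), pc η k with hddef
  have hVd : ∀ i, V i - V (i+1) = (d i : ℝ) := by
    intro i
    show ((nuN η (b i) : ℕ) : ℝ) - ((nuN η (b (i+1)) : ℕ) : ℝ) = ((d i : ℕ) : ℝ)
    rw [nuN_split η (hbmono (Nat.le_succ i))]
    have hdi : ((d i : ℕ) : ℝ) = ((∑ k ∈ Finset.Ico (b i) (b (i+1)), pc η k : ℕ) : ℝ) := rfl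
    rw [hdi]
    push_cast
    ring
  set x : ℕ → ℝ := fun i => (r / (N:ℝ)) * V i with hxdef
  have hxev : ∀ i, i ≤ m → |x i - l (a i)| < ε₀ := by
    intro i hi
    have hmem : a i ∈ Set.Icc u₁ (3*(n₀:ℝ)) := ⟨halow i, le_trans (haup i hi) hbsud⟩
    have hh := hpt (a i) hmem
    rw [nuAbove_eq_nuN η (r * a i)] at hh
    exact hh
  have hx0 : 0 ≤ x 0 := mul_nonneg (div_pos hrpos hNpos).le (Nat.cast_nonneg _)
  -- ℕ-side mass bound
  have hfloor_le : ⌊u₁ * r⌋₊ ≤ b 0 := by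
    have h2 : b 0 = ⌈u₁ * r⌉₊ := by show ⌈r * a 0⌉₊ = _; rw [ha0, mul_comm]
    rw [h2]
    exact Nat.floor_le_ceil _
  have hceil_le : b m ≤ ⌊(3*(n₀:ℝ)) * r⌋₊ := by
    show ⌈r * a m⌉₊ ≤ _
    rw [Nat.ceil_le]
    have h3 : r * a m ≤ 3*(n₀:ℝ)*r - 1 := by rw [ham, hbsdef]; nlinarith
    have h4 : 3*(n₀:ℝ)*r - 1 < (⌊3*(n₀:ℝ)*r⌋₊ : ℝ) := Nat.sub_one_lt_floor _
    linarith
  have hmass := mass_lower η b hbmono m _ _ hfloor_le hceil_le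
  have hcast : ∑ i ∈ Finset.range m, (r * a i) * (d i:ℝ)
      ≤ ((∑ k ∈ Finset.Ico (⌊u₁ * r⌋₊) (⌊(3*(n₀:ℝ)) * r⌋₊), k * pc η k : ℕ):ℝ) := by
    calc ∑ i ∈ Finset.range m, (r * a i) * (d i:ℝ)
        ≤ ∑ i ∈ Finset.range m, (b i:ℝ) * (d i:ℝ) :=
          Finset.sum_le_sum (fun i _ =>
            mul_le_mul_of_nonneg_right (Nat.le_ceil _) (Nat.cast_nonneg _))
      _ = ((∑ i ∈ Finset.range m, b i * d i : ℕ):ℝ) := by push_cast; rfl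
      _ ≤ _ := by exact_mod_cast hmass
  have hsum_eq : ∑ i ∈ Finset.range m, (r * a i) * (d i:ℝ)
      = (N:ℝ) * ∑ i ∈ Finset.range m, a i * (x i - x (i+1)) := by
    rw [Finset.mul_sum]
    refine Finset.sum_congr rfl (fun i _ => ?_)
    rw [← hVd i]
    show (r * a i) * (V i - V (i+1)) = (N:ℝ) * (a i * ((r / (N:ℝ)) * V i - (r / (N:ℝ)) * V (i+1)))
    field_simp
  have habel := abel_sum m a x
  clear_value u₁ bs ε₀ m h a b V d x
  -- lower bound for the Riemann-type sum
  have hsum_l : h * (∑ i ∈ Finset.range m, l (a (i+1))) - (bs - u₁) * ε₀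
      ≤ ∑ i ∈ Finset.range m, (a (i+1) - a i) * x (i+1) := by
    have hterm : ∀ i ∈ Finset.range m, h * (l (a (i+1)) - ε₀) ≤ (a (i+1) - a i) * x (i+1) := by
      intro i hi
      rw [hstep i]
      have hib := Finset.mem_range.mp hi
      have habs := hxev (i+1) (by omega)
      rw [abs_lt] at habs
      have hlb : l (a (i+1)) - ε₀ ≤ x (i+1) := by linarith [habs.2]
      exact mul_le_mul_of_nonneg_left hlb hhpos.le
    have hsl := Finset.sum_le_sum hterm
    have heq : ∑ i ∈ Finset.range m, h * (l (a (i+1)) - ε₀)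
        = h * (∑ i ∈ Finset.range m, l (a (i+1))) - (h * m) * ε₀ := by
      rw [Finset.mul_sum]
      rw [Finset.sum_congr rfl (fun i _ => by rw [mul_sub] : ∀ i ∈ Finset.range m,
        h * (l (a (i+1)) - ε₀) = h * l (a (i+1)) - h * ε₀)]
      rw [Finset.sum_sub_distrib, Finset.sum_const, Finset.card_range]
      push_cast
      ring
    have hmh : h * (m:ℝ) = bs - u₁ := by rw [hhdef]; field_simp
    rw [heq, hmh] at hsl
    exact hsl
  -- integral comparison
  have hIocsub : ∀ c e : ℝ, 0 < c → Set.Ioc c e ⊆ Set.Ioi (0:ℝ) :=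
    fun c e hc => fun z hz => lt_trans hc hz.1
  have hcell : ∀ (c e : ℝ), 0 < c → (he : e - c = h) →
      (∫ u in Set.Ioc c e, l u) ≤ h * l c := by
    intro c e hc he
    have hce : c ≤ e := by linarith [hhpos]
    have hle : ∀ u ∈ Set.Ioc c e, l u ≤ l c := fun u hu =>
      hanti (Set.mem_Ici.mpr hc.le) (Set.mem_Ici.mpr (le_trans hc.le hu.1.le)) hu.1.le
    calc (∫ u in Set.Ioc c e, l u) ≤ ∫ _ in Set.Ioc c e, l c :=
          setIntegral_mono_on (hint.mono_set (hIocsub c e hc))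
            ((integrableOn_const_iff).mpr (Or.inr (by rw [Real.volume_Ioc]; exact ENNReal.ofReal_lt_top)))
            measurableSet_Ioc hle
      _ = (e - c) * l c := by
          rw [setIntegral_const, Real.volume_real_Ioc_of_le (by linarith)]
          simp [smul_eq_mul]
      _ = h * l c := by rw [he]
  have hadj := sum_integral_adjacent l hint (fun i => a (i+1))
    (fun i j hij => hamono (by omega)) (hapos 1) m
  have hsum_ge : (∫ u in Set.Ioc (a 1) (a (m+1)), l u)
      ≤ h * ∑ i ∈ Finset.range m, l (a (i+1)) := by
    rw [← hadj, Finset.mul_sum]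
    exact Finset.sum_le_sum (fun i _ => hcell (a (i+1)) (a (i+1+1)) (hapos _) (hstep (i+1)))
  have hbsam : bs ≤ a (m+1) := by
    have : a m ≤ a (m+1) := hamono (Nat.le_succ m)
    linarith [ham ▸ this]
  have hmono_set : (∫ u in Set.Ioc (a 1) bs, l u) ≤ ∫ u in Set.Ioc (a 1) (a (m+1)), l u := by
    apply setIntegral_mono_set (hint.mono_set (hIocsub _ _ (hapos 1)))
    · refine (ae_restrict_iff' measurableSet_Ioc).mpr (Filter.Eventually.of_forall ?_)
      intro z hz
      exact hpos z (le_of_lt (lt_trans (hapos 1) hz.1))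
    · exact Filter.Eventually.of_forall (fun z hz => Set.Ioc_subset_Ioc_right hbsam hz) |>.mono (fun z hz => hz) |>.mono (fun z hz => hz) |>.mono (fun z hz => hz)
  have ha1bs : a 1 ≤ bs := haup 1 hm1
  have hsplit1 : (∫ u in Set.Ioc u₁ (a 1), l u) + (∫ u in Set.Ioc (a 1) bs, l u)
      = ∫ u in Set.Ioc u₁ bs, l u := by
    rw [← setIntegral_union (Set.Ioc_disjoint_Ioc_of_le le_rfl) measurableSet_Ioc
      (hint.mono_set (hIocsub _ _ hu₁pos)) (hint.mono_set (hIocsub _ _ (hapos 1))),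
      Set.Ioc_union_Ioc_eq_Ioc (halow 1) ha1bs]
  have ha1u₁ : a 1 - u₁ = h := by
    have := hstep 0
    rw [ha0] at this
    simpa using this
  have hIu₁a1 : (∫ u in Set.Ioc u₁ (a 1), l u) ≤ h * l u₁ := hcell u₁ (a 1) hu₁pos ha1u₁
  have hhl : h * l u₁ ≤ δ := by
    have hq : (bs - u₁) * l u₁ / δ ≤ (m:ℝ) := by
      have h0 : (⌈(bs - u₁) * l u₁ / δ⌉₊ : ℕ) ≤ m := by
        rw [hmdef]; exact le_max_right _ _
      have h1 : ((⌈(bs - u₁) * l u₁ / δ⌉₊ : ℕ) : ℝ) ≤ (m:ℝ) := by exact_mod_cast h0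
      exact le_trans (Nat.le_ceil _) h1
    rw [hhdef, div_mul_eq_mul_div, div_le_iff₀ hmpos]
    have h2 := (div_le_iff₀ hδ).mp hq
    linarith
  have hsplit2 : (∫ u in Set.Ioc u₁ (n₀:ℝ), l u) + (∫ u in Set.Ioc (n₀:ℝ) bs, l u)
      = ∫ u in Set.Ioc u₁ bs, l u := by
    rw [← setIntegral_union (Set.Ioc_disjoint_Ioc_of_le le_rfl) measurableSet_Ioc
      (hint.mono_set (hIocsub _ _ hu₁pos)) (hint.mono_set (hIocsub _ _ hn₀pos)),
      Set.Ioc_union_Ioc_eq_Ioc (by linarith) hn₀bs]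
  have htail_nonneg : 0 ≤ ∫ u in Set.Ioc (n₀:ℝ) bs, l u :=
    setIntegral_nonneg measurableSet_Ioc (fun z hz => hpos z (le_of_lt (lt_of_lt_of_le hn₀pos hz.1.le)))
  have hIbs_lb : 1 - δ < ∫ u in Set.Ioc u₁ bs, l u := by
    rw [← hsplit2]
    linarith
  have hIbs_ub : (∫ u in Set.Ioc u₁ bs, l u) ≤ 1 := by
    rw [← hI]
    apply setIntegral_mono_set hint
    · refine (ae_restrict_iff' measurableSet_Ioi).mpr (Filter.Eventually.of_forall ?_)
      intro z hz
      exact hpos z (le_of_lt hz)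
    · exact Filter.Eventually.of_forall (fun z hz => hIocsub _ _ hu₁pos hz)
  have htail : (∫ u in Set.Ioc (n₀:ℝ) bs, l u) ≤ δ := by
    have := hsplit2
    linarith [hn₀]
  have hconst_tail : (bs - (n₀:ℝ)) * l bs ≤ ∫ u in Set.Ioc (n₀:ℝ) bs, l u := by
    have hle : ∀ z ∈ Set.Ioc (n₀:ℝ) bs, l bs ≤ l z := fun z hz =>
      hanti (Set.mem_Ici.mpr (le_of_lt (lt_trans hn₀pos hz.1))) (Set.mem_Ici.mpr (by linarith)) hz.2
    calc (bs - (n₀:ℝ)) * l bs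
        = ∫ _ in Set.Ioc (n₀:ℝ) bs, l bs := by
          rw [setIntegral_const, Real.volume_real_Ioc_of_le (by linarith)]
          simp [smul_eq_mul]
      _ ≤ ∫ u in Set.Ioc (n₀:ℝ) bs, l u :=
          setIntegral_mono_on
            ((integrableOn_const_iff).mpr (Or.inr (by rw [Real.volume_Ioc]; exact ENNReal.ofReal_lt_top)))
            (hint.mono_set (hIocsub _ _ hn₀pos)) measurableSet_Ioc hle
  have hlbs_nonneg : 0 ≤ l bs := hpos bs (by linarith)
  have hbs3 : bs ≤ 3*(bs - (n₀:ℝ)) := by rw [hbsdef]; linarith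
  have hbslbs : bs * l bs ≤ 3*δ := by
    calc bs * l bs ≤ (3*(bs - (n₀:ℝ))) * l bs := mul_le_mul_of_nonneg_right hbs3 hlbs_nonneg
      _ = 3*((bs - (n₀:ℝ)) * l bs) := by ring
      _ ≤ 3*(∫ u in Set.Ioc (n₀:ℝ) bs, l u) := by linarith [hconst_tail]
      _ ≤ 3*δ := by linarith [htail]
  have hxm : x m < l bs + ε₀ := by
    have habs := hxev m le_rfl
    rw [abs_lt, ham] at habs
    linarith [habs.1]
  -- numeric bounds on ε₀-terms
  have hbse : bs * ε₀ ≤ δ/2 := by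
    have h1 : bs * ε₀ ≤ 3*(n₀:ℝ) * ε₀ := mul_le_mul_of_nonneg_right hbsud hε₀pos.le
    have h2 : 3*(n₀:ℝ) * ε₀ = δ/2 := by rw [hε₀def]; field_simp; ring
    linarith
  have hbsue : (bs - u₁) * ε₀ ≤ δ/2 := by
    have h1 : (bs - u₁) * ε₀ ≤ bs * ε₀ := mul_le_mul_of_nonneg_right (by linarith) hε₀pos.le
    linarith
  -- assemble
  have hT : (1 - 6*δ) < ∑ i ∈ Finset.range m, a i * (x i - x (i+1)) := by
    rw [habel]
    have h3 : a m * x m ≤ bs * (l bs + ε₀) := by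
      rw [ham]
      exact mul_le_mul_of_nonneg_left hxm.le (by linarith)
    have h4 : bs * (l bs + ε₀) ≤ 3*δ + δ/2 := by rw [mul_add]; linarith
    have h5 : 0 ≤ a 0 * x 0 := mul_nonneg (hapos 0).le hx0
    have hchain : 1 - 2*δ < h * ∑ i ∈ Finset.range m, l (a (i+1)) := by
      have := hsplit1
      linarith [hsum_ge, hmono_set, hIu₁a1, hIbs_lb]
    linarith [hsum_l]
  calc (1 - 6*δ) * (N:ℝ)
      < (∑ i ∈ Finset.range m, a i * (x i - x (i+1))) * (N:ℝ) := (mul_lt_mul_iff_left₀ hNpos).mpr hT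
    _ = (N:ℝ) * ∑ i ∈ Finset.range m, a i * (x i - x (i+1)) := mul_comm _ _
    _ = ∑ i ∈ Finset.range m, (r * a i) * (d i:ℝ) := hsum_eq.symm
    _ ≤ _ := hcast

/-- under a limit shape, almost all of the mass `N` is carried by parts of
size between `u₁·r_N` and `u_d·r_N`. -/
theorem stmt2 (μ : ∀ N : ℕ, Nat.Partition N → ℝ) (hμ : IsProbSeq μ)
    (r : ℕ → ℝ) (l : ℝ → ℝ) (hls : HasLimitShape μ r l) :
    ∀ ε : ℝ, 0 < ε → ∃ u₁ ud : ℝ, 0 < u₁ ∧ u₁ < ud ∧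
      Tendsto (fun N : ℕ => prob (μ N) (fun η =>
          (1 - ε) * (N : ℝ) <
            ((∑ k ∈ Finset.Ico (⌊u₁ * r N⌋₊) (⌊ud * r N⌋₊), k * pc η k : ℕ) : ℝ)))
        atTop (𝓝 1) := by
  intro ε hε
  obtain ⟨hr, hrN, hcont, hanti, hpos, hI, hev⟩ := hls
  have hint : IntegrableOn l (Set.Ioi 0) := by
    by_contra hni
    rw [MeasureTheory.integral_undef hni] at hI
    norm_num at hI
  set δ : ℝ := ε/6 with hδdef
  have hδ : 0 < δ := by positivity
  obtain ⟨n₀, hn₀1, hn₀⟩ := exists_n0 l hint hI δ hδ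
  have hn₀R : (1:ℝ) ≤ (n₀:ℝ) := by exact_mod_cast hn₀1
  have hn₀pos : (0:ℝ) < (n₀:ℝ) := by linarith
  have hu₁ud : (1:ℝ)/(n₀:ℝ) < 3*(n₀:ℝ) := by
    have h1 : (1:ℝ)/(n₀:ℝ) ≤ 1 := by rw [div_le_one hn₀pos]; exact hn₀R
    linarith
  refine ⟨1/(n₀:ℝ), 3*(n₀:ℝ), by positivity, hu₁ud, ?_⟩
  set ε₀ : ℝ := δ/(6*(n₀:ℝ)) with hε₀def
  have hε₀pos : 0 < ε₀ := by positivity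
  have hT := hev (1/(n₀:ℝ)) (3*(n₀:ℝ)) ε₀ (by positivity) hu₁ud hε₀pos
  have hr1 := r_eventually_gt μ hμ r l ⟨hr, hrN, hcont, hanti, hpos, hI, hev⟩ 1
  apply tendsto_of_tendsto_of_tendsto_of_le_of_le' hT tendsto_const_nhds
  · filter_upwards [hr1, eventually_ge_atTop 1] with N hrN1 hN1
    refine prob_le_prob (hμ N hN1).1 (fun η hη => ?_)
    have hpt := sup_event hanti hpos hN1 η (hr N hN1) (by positivity) hη
    have hc := core_bound hanti hpos hint hI hn₀1 hδ hn₀ hN1 hrN1 η hpt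
    have heq : (1:ℝ) - ε = 1 - 6*δ := by rw [hδdef]; ring
    rw [heq]
    exact hc
  · filter_upwards [eventually_ge_atTop 1] with N hN1
    exact prob_le_one (hμ N hN1).1 (hμ N hN1).2
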